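/- Let G be an infinite, locally finite, connected graph and suppose there exists a finite set K of vertices such that G∖K has at least two transient connected components. Then G admits a non-constant bounded harmonic function of finite Dirichlet energy; indeed, the function h(v) = probability that simple random walk started at v eventually stays in a fixed one of these transient components is such a function. -/

import Mathlib

open scoped Classical

noncomputable section

/-- The graph `G` with the vertex set `K` deleted. -/
def avoidGraph {V : Type*} (G : SimpleGraph V) (K : Set V) : SimpleGraph V where
  Adj u w := G.Adj u w ∧ u ∉ K ∧ w ∉ K
  symm := by constructor; intro u w h; exact ⟨h.1.symm, h.2.2, h.2.1⟩
  loopless := by constructor; intro u h; exact G.loopless.irrefl u h.1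

/-- `W` is a connected component of `G ∖ K`: it avoids `K`, it is nonempty, and it is
exactly the set of vertices reachable from any of its points in `G ∖ K`. -/
def IsComponentAvoiding {V : Type*} (G : SimpleGraph V) (K : Set V) (W : Set V) : Prop :=
  (∀ w ∈ W, w ∉ K) ∧ W.Nonempty ∧
    ∀ a ∈ W, W = {u | (avoidGraph G K).Reachable a u}

/-- Transience of the induced subgraph on `W` (T. Lyons' criterion): there is a unit flow
`θ` from some `a ∈ W` to infinity, supported on edges inside `W`, with finite energy. -/
def TransientOn {V : Type*} (G : SimpleGraph V) (W : Set V) : Prop :=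
  ∃ (a : V) (θ : V → V → ℝ), a ∈ W ∧
    (∀ x y, θ x y = - θ y x) ∧
    (∀ x y, θ x y ≠ 0 → G.Adj x y ∧ x ∈ W ∧ y ∈ W) ∧
    (∀ x ∈ W, x ≠ a → ∑' y, θ x y = 0) ∧
    (∑' y, θ a y = 1) ∧
    Summable (fun p : V × V => θ p.1 p.2 ^ 2)

/-- `h` is harmonic on `G`: `deg(v)·h(v) = Σ_{u∼v} h(u)` for every `v`. -/
def HarmonicOn {V : Type*} (G : SimpleGraph V) [∀ u : V, Fintype (G.neighborSet u)]
    (h : V → ℝ) : Prop :=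
  ∀ u : V, (G.degree u : ℝ) * h u = ∑ w ∈ G.neighborFinset u, h w

/-- `h` has finite Dirichlet energy: `(1/2)·Σ over oriented edges of (h(e⁻)−h(e⁺))² < ∞`. -/
def FiniteDirichletEnergy {V : Type*} (G : SimpleGraph V) (h : V → ℝ) : Prop :=
  Summable (fun p : V × V => if G.Adj p.1 p.2 then (h p.1 - h p.2) ^ 2 else 0)

section AuxiliaryLemmas
open scoped ENNReal RealInnerProductSpace
open Filter


variable {ι : Type*}

lemma memℓp_two_of_summable_sq {F : ι → ℝ} (h : Summable fun i => F i ^ 2) :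
    Memℓp F 2 := by
  apply memℓp_gen
  have he : ∀ i, ‖F i‖ ^ (2 : ℝ≥0∞).toReal = F i ^ 2 := by
    intro i
    rw [ENNReal.toReal_ofNat, show ((2:ℝ)) = ((2:ℕ):ℝ) by norm_num, Real.rpow_natCast]
    simp [sq_abs]
  simpa [he] using h

lemma summable_sq_of_mem (z : lp (fun _ : ι => ℝ) 2) : Summable fun i => z i ^ 2 := by
  have h := lp.memℓp z
  have h2 := (memℓp_gen_iff (p := 2) (by norm_num)).1 h
  have he : ∀ i, ‖z i‖ ^ (2 : ℝ≥0∞).toReal = z i ^ 2 := by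
    intro i
    rw [ENNReal.toReal_ofNat, show ((2:ℝ)) = ((2:ℕ):ℝ) by norm_num, Real.rpow_natCast]
    simp [sq_abs]
  simpa [he] using h2

lemma inner_eq_tsum_real (f g : lp (fun _ : ι => ℝ) 2) :
    ⟪f, g⟫ = ∑' i, f i * g i := by
  rw [lp.inner_eq_tsum]
  simp [RCLike.inner_apply, starRingEnd_apply, mul_comm]

lemma norm_sq_eq_tsum_real (f : lp (fun _ : ι => ℝ) 2) :
    ‖f‖ ^ 2 = ∑' i, f i ^ 2 := by
  rw [← real_inner_self_eq_norm_sq, inner_eq_tsum_real]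
  simp [sq]

lemma norm_le_of_sq_le {z w : lp (fun _ : ι => ℝ) 2} (h : ∀ i, z i ^ 2 ≤ w i ^ 2) :
    ‖z‖ ≤ ‖w‖ := by
  have h2 : ‖z‖ ^ 2 ≤ ‖w‖ ^ 2 := by
    rw [norm_sq_eq_tsum_real, norm_sq_eq_tsum_real]
    exact Summable.tsum_le_tsum h (summable_sq_of_mem z) (summable_sq_of_mem w)
  have h3 := Real.sqrt_le_sqrt h2
  rwa [Real.sqrt_sq (norm_nonneg _), Real.sqrt_sq (norm_nonneg _)] at h3

variable {ι : Type*}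

lemma mem_of_coord_tendsto {C : Submodule ℝ (lp (fun _ : ι => ℝ) 2)}
    (hC : IsClosed (C : Set (lp (fun _ : ι => ℝ) 2))) {M : ℝ}
    {w : lp (fun _ : ι => ℝ) 2} {ws : ℕ → lp (fun _ : ι => ℝ) 2}
    (hmem : ∀ n, ws n ∈ C) (hbd : ∀ n, ‖ws n‖ ≤ M)
    (hcoord : ∀ i, Tendsto (fun n => ws n i) atTop (nhds (w i))) : w ∈ C := by
  haveI : CompleteSpace C := hC.completeSpace_coe
  rw [← Submodule.orthogonal_orthogonal C]
  rw [Submodule.mem_orthogonal]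
  intro y hy
  have hy0 : ∀ n, ⟪y, ws n⟫ = 0 := by
    intro n
    rw [real_inner_comm]
    exact (Submodule.mem_orthogonal _ y).1 hy (ws n) (hmem n)
  have hM0 : (0:ℝ) ≤ M := le_trans (norm_nonneg _) (hbd 0)
  set B : ℝ := M + ‖w‖ + 1 with hB
  have hBpos : 0 < B := by positivity
  have key : Tendsto (fun n => ⟪y, ws n⟫) atTop (nhds ⟪y, w⟫) := by
    rw [Metric.tendsto_atTop]
    intro ε hε
    have hs : HasSum (fun i => lp.single 2 i (y i)) y :=
      lp.hasSum_single (by norm_num) y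
    have hball : ∀ᶠ s : Finset ι in atTop,
        (∑ i ∈ s, lp.single 2 i (y i)) ∈ Metric.ball y (ε / (2 * B)) :=
      hs.eventually (Metric.ball_mem_nhds y (by positivity))
    obtain ⟨s, hsball⟩ := hball.exists
    have hT : Tendsto (fun n => ∑ i ∈ s, y i * (ws n i - w i)) atTop (nhds 0) := by
      have : Tendsto (fun n => ∑ i ∈ s, y i * (ws n i - w i)) atTop
          (nhds (∑ i ∈ s, y i * (w i - w i))) := by
        apply tendsto_finset_sum
        intro i _
        exact tendsto_const_nhds.mul ((hcoord i).sub tendsto_const_nhds)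
      simpa using this
    have hT2 : ∀ᶠ n in atTop, |∑ i ∈ s, y i * (ws n i - w i)| < ε / 2 := by
      have := hT.eventually (Metric.ball_mem_nhds 0 (show (0:ℝ) < ε/2 by positivity))
      simpa [Real.dist_eq] using this
    obtain ⟨N, hN⟩ := hT2.exists_forall_of_atTop
    refine ⟨N, fun n hn => ?_⟩
    have hNn := hN n hn
    rw [Real.dist_eq, ← inner_sub_right]
    set ys : lp (fun _ : ι => ℝ) 2 := ∑ i ∈ s, lp.single 2 i (y i) with hys
    have hsplit : ⟪y, ws n - w⟫ = ⟪ys, ws n - w⟫ + ⟪y - ys, ws n - w⟫ := by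
      rw [← inner_add_left]
      congr 1
      abel
    have hinner_ys : ⟪ys, ws n - w⟫ = ∑ i ∈ s, y i * (ws n i - w i) := by
      rw [hys, sum_inner]
      refine Finset.sum_congr rfl fun i _ => ?_
      rw [lp.inner_single_left]
      simp [RCLike.inner_apply, starRingEnd_apply, lp.coeFn_sub, mul_comm]
    have hnorm2 : ‖y - ys‖ < ε / (2 * B) := by
      have := hsball
      rw [Metric.mem_ball, dist_eq_norm] at this
      rwa [norm_sub_rev]
    have hbound : |⟪y - ys, ws n - w⟫| ≤ ‖y - ys‖ * ‖ws n - w‖ :=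
      abs_real_inner_le_norm _ _
    have hwsw : ‖ws n - w‖ ≤ B := by
      calc ‖ws n - w‖ ≤ ‖ws n‖ + ‖w‖ := norm_sub_le _ _
        _ ≤ M + ‖w‖ := by linarith [hbd n]
        _ ≤ B := by rw [hB]; linarith
    have h2 : |⟪y - ys, ws n - w⟫| ≤ ε / (2 * B) * B := by
      refine le_trans hbound ?_
      apply mul_le_mul (le_of_lt hnorm2) hwsw (norm_nonneg _) (by positivity)
    have h2' : ε / (2 * B) * B = ε / 2 := by field_simp
    calc |⟪y, ws n - w⟫| ≤ |⟪ys, ws n - w⟫| + |⟪y - ys, ws n - w⟫| := by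
          rw [hsplit]; exact abs_add_le _ _
      _ < ε / 2 + ε / 2 := by
          apply add_lt_add_of_lt_of_le
          · rw [hinner_ys]; exact hNn
          · rw [← h2']; exact h2
      _ = ε := by ring
  have hconst : (fun n : ℕ => ⟪y, ws n⟫) = fun _ => (0:ℝ) := funext hy0
  rw [hconst] at key
  exact (tendsto_nhds_unique tendsto_const_nhds key).symm

variable {V : Type*} (G : SimpleGraph V)

/-- The discrete gradient of a function on vertices. -/
def gradFn (f : V → ℝ) : V × V → ℝ :=
  fun p => if G.Adj p.1 p.2 then f p.1 - f p.2 else 0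

lemma gradFn_sub (f g : V → ℝ) (p : V × V) :
    gradFn G f p - gradFn G g p = gradFn G (f - g) p := by
  unfold gradFn; by_cases h : G.Adj p.1 p.2 <;> simp [h] <;> ring

lemma walk_transfer {P : V → Prop} (step : ∀ x y, G.Adj x y → P x → P y) :
    ∀ {a b : V}, G.Walk a b → P a → P b := by
  intro a b w
  induction w with
  | nil => exact id
  | cons h _ ih => exact fun hp => ih (step _ _ h hp)

variable [∀ u : V, Fintype (G.neighborSet u)]

lemma gradFn_support_finite {f : V → ℝ} (hf : (Function.support f).Finite) :
    {p : V × V | gradFn G f p ≠ 0}.Finite := by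
  have hsub : {p : V × V | gradFn G f p ≠ 0} ⊆
      ⋃ v ∈ Function.support f,
        (({v} : Set V) ×ˢ G.neighborSet v) ∪ (G.neighborSet v ×ˢ ({v} : Set V)) := by
    rintro ⟨x, y⟩ hp
    simp only [Set.mem_setOf_eq, gradFn] at hp
    by_cases hadj : G.Adj x y
    · rw [if_pos hadj] at hp
      have hxy : f x ≠ 0 ∨ f y ≠ 0 := by
        by_contra hc
        push_neg at hc
        rw [hc.1, hc.2] at hp; simp at hp
      rcases hxy with hx | hy
      · refine Set.mem_biUnion hx ?_
        exact Or.inl ⟨rfl, hadj⟩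
      · refine Set.mem_biUnion hy ?_
        exact Or.inr ⟨hadj.symm, rfl⟩
    · rw [if_neg hadj] at hp; exact absurd rfl hp
  refine Set.Finite.subset ?_ hsub
  refine Set.Finite.biUnion hf fun v _ => ?_
  exact ((Set.finite_singleton v).prod (G.neighborSet v).toFinite).union
    ((G.neighborSet v).toFinite.prod (Set.finite_singleton v))

lemma memℓp_of_finite_support {F : V × V → ℝ} (h : {p | F p ≠ 0}.Finite) :
    Memℓp F 2 := by
  apply memℓp_gen
  apply summable_of_ne_finset_zero (s := h.toFinset)
  intro p hp
  have : F p = 0 := by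
    by_contra hc
    exact hp (h.mem_toFinset.2 hc)
  simp [this]

/-- Rows of an edge-supported flow are finitely supported. -/
lemma row_support {θ : V → V → ℝ} (hedge : ∀ x y, θ x y ≠ 0 → G.Adj x y) (x : V) :
    ∀ y ∉ G.neighborFinset x, θ x y = 0 := by
  intro y hy
  by_contra hc
  exact hy (G.mem_neighborFinset x y |>.2 (hedge x y hc))

/-- The central pairing identity: the inner product of a gradient with a flow equals
twice the divergence pairing. -/
lemma pairing (f : V → ℝ) (θ : V → V → ℝ) (A : Finset V)
    (hanti : ∀ x y, θ x y = - θ y x)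
    (hedge : ∀ x y, θ x y ≠ 0 → G.Adj x y)
    (hsupp : ∀ x y, gradFn G f (x, y) * θ x y ≠ 0 → x ∈ A ∧ y ∈ A)
    (hrow : ∀ x ∈ A, f x ≠ 0 → ∀ y, θ x y ≠ 0 → y ∈ A) :
    ∑' p : V × V, gradFn G f p * θ p.1 p.2 = 2 * ∑ x ∈ A, f x * ∑' y, θ x y := by
  have h1 : ∑' p : V × V, gradFn G f p * θ p.1 p.2
      = ∑ p ∈ A ×ˢ A, gradFn G f p * θ p.1 p.2 := by
    apply tsum_eq_sum
    intro p hp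
    by_contra hc
    apply hp
    rw [Finset.mem_product]
    exact hsupp p.1 p.2 hc
  have hsummand : ∀ x y : V, gradFn G f (x, y) * θ x y = (f x - f y) * θ x y := by
    intro x y
    by_cases hadj : G.Adj x y
    · simp [gradFn, hadj]
    · have : θ x y = 0 := by
        by_contra hc; exact hadj (hedge x y hc)
      simp [this]
  rw [h1, Finset.sum_product]
  have h2 : ∑ x ∈ A, ∑ y ∈ A, gradFn G f (x, y) * θ x y
      = ∑ x ∈ A, ∑ y ∈ A, (f x - f y) * θ x y := by
    refine Finset.sum_congr rfl fun x _ => Finset.sum_congr rfl fun y _ => hsummand x y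
  rw [h2]
  have h3 : ∑ x ∈ A, ∑ y ∈ A, (f x - f y) * θ x y
      = 2 * ∑ x ∈ A, ∑ y ∈ A, f x * θ x y := by
    have e1 : ∀ x y : V, (f x - f y) * θ x y = f x * θ x y - f y * θ x y := by
      intros; ring
    simp only [e1, Finset.sum_sub_distrib]
    have e2 : ∑ x ∈ A, ∑ y ∈ A, f y * θ x y = - ∑ x ∈ A, ∑ y ∈ A, f x * θ x y := by
      rw [Finset.sum_comm]
      rw [← Finset.sum_neg_distrib]
      refine Finset.sum_congr rfl fun y _ => ?_
      rw [← Finset.sum_neg_distrib]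
      refine Finset.sum_congr rfl fun x _ => ?_
      rw [hanti x y]; ring
    rw [e2]; ring
  rw [h3]
  congr 1
  refine Finset.sum_congr rfl fun x hx => ?_
  by_cases hfx : f x = 0
  · simp [hfx]
  · have hz : ∀ y ∉ A, f x * θ x y = 0 := by
      intro y hy
      have : θ x y = 0 := by
        by_contra hc
        exact hy (hrow x hx hfx y hc)
      simp [this]
    rw [show ∑ y ∈ A, f x * θ x y = ∑' y, f x * θ x y from (tsum_eq_sum hz).symm,
      tsum_mul_left]

variable {V : Type*} (G : SimpleGraph V)

/-- Unit flow along a walk. -/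
def pathFlow : ∀ {a b : V}, G.Walk a b → V → V → ℝ
  | _, _, .nil => 0
  | _, _, @SimpleGraph.Walk.cons _ _ a c _ _ w =>
      (fun x y => (if (x, y) = (a, c) then (1:ℝ) else 0)
        - (if (x, y) = (c, a) then 1 else 0)) + pathFlow w

lemma pathFlow_anti {a b : V} (w : G.Walk a b) : ∀ x y,
    pathFlow G w x y = - pathFlow G w y x := by
  induction w with
  | nil => intro x y; simp [pathFlow]
  | @cons a c b hac w ih =>
    intro x y
    show (if (x, y) = (a, c) then (1:ℝ) else 0) - (if (x, y) = (c, a) then 1 else 0)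
        + pathFlow G w x y = -((if (y, x) = (a, c) then (1:ℝ) else 0)
        - (if (y, x) = (c, a) then 1 else 0) + pathFlow G w y x)
    rw [ih x y]
    have e1 : ((x, y) = (a, c)) = ((y, x) = (c, a)) := by
      simp [Prod.ext_iff, and_comm]
    have e2 : ((x, y) = (c, a)) = ((y, x) = (a, c)) := by
      simp [Prod.ext_iff, and_comm]
    simp only [e1, e2]; ring

lemma pathFlow_edge {a b : V} (w : G.Walk a b) : ∀ x y,
    pathFlow G w x y ≠ 0 → G.Adj x y := by
  induction w with
  | nil => intro x y h; simp [pathFlow] at h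
  | @cons a c b hac w ih =>
    intro x y h
    by_cases h1 : (x, y) = (a, c)
    · rw [Prod.ext_iff] at h1; obtain ⟨rfl, rfl⟩ := h1; exact hac
    · by_cases h2 : (x, y) = (c, a)
      · rw [Prod.ext_iff] at h2; obtain ⟨rfl, rfl⟩ := h2; exact hac.symm
      · apply ih
        intro hz
        apply h
        show (if (x, y) = (a, c) then (1:ℝ) else 0)
          - (if (x, y) = (c, a) then 1 else 0) + pathFlow G w x y = 0
        rw [if_neg h1, if_neg h2, hz]; ring

lemma pathFlow_mem_support {a b : V} (w : G.Walk a b) : ∀ x y,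
    pathFlow G w x y ≠ 0 → x ∈ w.support ∧ y ∈ w.support := by
  induction w with
  | nil => intro x y h; simp [pathFlow] at h
  | @cons a c b hac w ih =>
    intro x y h
    have hmem : ∀ z, z ∈ w.support → z ∈ (SimpleGraph.Walk.cons hac w).support := by
      intro z hz
      rw [SimpleGraph.Walk.support_cons]
      exact List.mem_cons_of_mem _ hz
    by_cases h1 : (x, y) = (a, c)
    · rw [Prod.ext_iff] at h1; obtain ⟨rfl, rfl⟩ := h1
      exact ⟨SimpleGraph.Walk.start_mem_support _,
        hmem _ (SimpleGraph.Walk.start_mem_support w)⟩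
    · by_cases h2 : (x, y) = (c, a)
      · rw [Prod.ext_iff] at h2; obtain ⟨rfl, rfl⟩ := h2
        exact ⟨hmem _ (SimpleGraph.Walk.start_mem_support w),
          SimpleGraph.Walk.start_mem_support _⟩
      · have h3 : pathFlow G w x y ≠ 0 := by
          intro hz
          apply h
          show (if (x, y) = (a, c) then (1:ℝ) else 0)
            - (if (x, y) = (c, a) then 1 else 0) + pathFlow G w x y = 0
          rw [if_neg h1, if_neg h2, hz]; ring
        obtain ⟨hx, hy⟩ := ih x y h3
        exact ⟨hmem _ hx, hmem _ hy⟩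

lemma pathFlow_row_summable {a b : V} (w : G.Walk a b) (x : V) :
    Summable (fun y => pathFlow G w x y) := by
  apply summable_of_ne_finset_zero (s := w.support.toFinset)
  intro y hy
  by_contra hc
  exact hy (List.mem_toFinset.2 (pathFlow_mem_support G w x y hc).2)

lemma pathFlow_rowsum {a b : V} (w : G.Walk a b) (x : V) :
    ∑' y, pathFlow G w x y = (if x = a then 1 else 0) - (if x = b then 1 else 0) := by
  induction w with
  | nil => simp [pathFlow]
  | @cons a c b hac w ih =>
    have hrow : ∑' y, pathFlow G (SimpleGraph.Walk.cons hac w) x y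
        = ∑' y, ((if (x, y) = (a, c) then (1:ℝ) else 0)
          - (if (x, y) = (c, a) then 1 else 0) + pathFlow G w x y) :=
      tsum_congr fun y => rfl
    rw [hrow]
    have hs1 : Summable (fun y => (if (x, y) = (a, c) then (1:ℝ) else 0)
        - (if (x, y) = (c, a) then 1 else 0)) := by
      apply summable_of_ne_finset_zero (s := {c, a})
      intro y hy
      simp only [Finset.mem_insert, Finset.mem_singleton] at hy
      push_neg at hy
      rw [if_neg (by simp [Prod.ext_iff]; intro _ h; exact absurd h hy.1),
        if_neg (by simp [Prod.ext_iff]; intro _ h; exact absurd h hy.2)]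
      ring
    rw [Summable.tsum_add hs1 (pathFlow_row_summable G w x), ih]
    have hstep : ∑' y, ((if (x, y) = (a, c) then (1:ℝ) else 0)
        - (if (x, y) = (c, a) then 1 else 0))
        = (if x = a then 1 else 0) - (if x = c then 1 else 0) := by
      have hs2 : Summable (fun y => if (x, y) = (a, c) then (1:ℝ) else 0) := by
        apply summable_of_ne_finset_zero (s := {c})
        intro y hy
        simp only [Finset.mem_singleton] at hy
        rw [if_neg (by simp [Prod.ext_iff]; intro _ h; exact absurd h hy)]
      have hs3 : Summable (fun y => if (x, y) = (c, a) then (1:ℝ) else 0) := by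
        apply summable_of_ne_finset_zero (s := {a})
        intro y hy
        simp only [Finset.mem_singleton] at hy
        rw [if_neg (by simp [Prod.ext_iff]; intro _ h; exact absurd h hy)]
      rw [Summable.tsum_sub hs2 hs3]
      congr 1
      · by_cases hx : x = a
        · subst hx
          rw [if_pos rfl]
          rw [show (fun y => if ((x, y) = (x, c) : Prop) then (1:ℝ) else 0)
            = fun y => if y = c then (1:ℝ) else 0 from funext fun y => by
              simp [Prod.ext_iff]]
          exact tsum_ite_eq c (fun _ => (1:ℝ))
        · rw [if_neg hx]
          rw [show (fun y => if ((x, y) = (a, c) : Prop) then (1:ℝ) else 0)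
            = fun _ => (0:ℝ) from funext fun y => by simp [Prod.ext_iff, hx]]
          exact tsum_zero
      · by_cases hx : x = c
        · subst hx
          rw [if_pos rfl]
          rw [show (fun y => if ((x, y) = (x, a) : Prop) then (1:ℝ) else 0)
            = fun y => if y = a then (1:ℝ) else 0 from funext fun y => by
              simp [Prod.ext_iff]]
          exact tsum_ite_eq a (fun _ => (1:ℝ))
        · rw [if_neg hx]
          rw [show (fun y => if ((x, y) = (c, a) : Prop) then (1:ℝ) else 0)
            = fun _ => (0:ℝ) from funext fun y => by simp [Prod.ext_iff, hx]]
          exact tsum_zero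
    rw [hstep]; ring

lemma pathFlow_support_finite {a b : V} (w : G.Walk a b) :
    {p : V × V | pathFlow G w p.1 p.2 ≠ 0}.Finite := by
  apply Set.Finite.subset (Set.Finite.prod w.support.toFinset.finite_toSet
    w.support.toFinset.finite_toSet)
  rintro ⟨x, y⟩ hp
  obtain ⟨hx, hy⟩ := pathFlow_mem_support G w x y hp
  exact ⟨by simpa using hx, by simpa using hy⟩
lemma gradFn_add' (f g : V → ℝ) (p : V × V) :
    gradFn G f p + gradFn G g p = gradFn G (f + g) p := by
  unfold gradFn; by_cases h : G.Adj p.1 p.2 <;> simp [h] <;> ring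

lemma gradFn_smul' (c : ℝ) (f : V → ℝ) (p : V × V) :
    c * gradFn G f p = gradFn G (c • f) p := by
  unfold gradFn; by_cases h : G.Adj p.1 p.2 <;> simp [h] <;> ring

def clampFn (t : ℝ) : ℝ := max 0 (min t 1)

lemma clampFn_lip (s t : ℝ) : |clampFn s - clampFn t| ≤ |s - t| := by
  unfold clampFn
  rw [max_comm 0 (min s 1), max_comm 0 (min t 1)]
  refine le_trans (abs_max_sub_max_le_abs _ _ _) ?_
  refine le_trans (abs_min_sub_min_le_max _ _ _ _) ?_
  simp

lemma clampFn_mem (t : ℝ) : 0 ≤ clampFn t ∧ clampFn t ≤ 1 := by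
  constructor
  · exact le_max_left _ _
  · exact max_le (by norm_num) (min_le_right _ _)

lemma clampFn_zero : clampFn 0 = 0 := by unfold clampFn; simp
lemma clampFn_one : clampFn 1 = 1 := by unfold clampFn; norm_num

lemma continuous_clampFn : Continuous clampFn :=
  continuous_const.max (continuous_id.min continuous_const)


end AuxiliaryLemmas

set_option maxHeartbeats 3000000 in
open scoped ENNReal RealInnerProductSpace in
/-- Let `G` be an infinite, locally finite, connected graph, and suppose there
is a finite vertex set `K` such that `G ∖ K` has at least two transient connected
components.  Then `G` admits a non-constant bounded harmonic function of finite Dirichlet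
energy. -/
theorem two_transient_components_harmonic_dirichlet
    {V : Type*} [Infinite V] (G : SimpleGraph V)
    [∀ u : V, Fintype (G.neighborSet u)]
    (hconn : G.Connected)
    (K : Set V) (hK : K.Finite)
    (W₁ W₂ : Set V)
    (hW₁ : IsComponentAvoiding G K W₁) (hW₂ : IsComponentAvoiding G K W₂)
    (hne : W₁ ≠ W₂)
    (ht₁ : TransientOn G W₁) (ht₂ : TransientOn G W₂) :
    ∃ h : V → ℝ,
      HarmonicOn G h ∧
      (∃ C : ℝ, ∀ u, |h u| ≤ C) ∧
      FiniteDirichletEnergy G h ∧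
      ¬ (∀ u w : V, h u = h w) := by
  classical
  obtain ⟨a₁, θ₁, ha₁, θ₁anti, θ₁sup, θ₁div, θ₁unit, θ₁sq⟩ := ht₁
  obtain ⟨a₂, θ₂, ha₂, θ₂anti, θ₂sup, θ₂div, θ₂unit, θ₂sq⟩ := ht₂
  have hdisj : ∀ x, x ∈ W₁ → x ∈ W₂ → False := by
    intro x h1 h2
    exact hne ((hW₁.2.2 x h1).trans (hW₂.2.2 x h2).symm)
  have ha₂W₁ : a₂ ∉ W₁ := fun h => hdisj a₂ h ha₂
  set χ : V → ℝ := fun x => if x ∈ W₁ then 1 else 0 with hχdef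
  -- edges leaving W₁ end in K
  have hboundary : ∀ x y, x ∈ W₁ → y ∉ W₁ → G.Adj x y → y ∈ K := by
    intro x y hx hy hadj
    by_contra hyK
    apply hy
    have hxK : x ∉ K := hW₁.1 x hx
    have hreach : (avoidGraph G K).Reachable x y :=
      SimpleGraph.Adj.reachable ⟨hadj, hxK, hyK⟩
    have := hW₁.2.2 x hx
    rw [this]
    exact hreach
  -- the gradient of the indicator has finite support
  have husup : {p : V × V | gradFn G χ p ≠ 0}.Finite := by
    have hsub : {p : V × V | gradFn G χ p ≠ 0} ⊆
        ⋃ k ∈ K, (({k} : Set V) ×ˢ G.neighborSet k) ∪ (G.neighborSet k ×ˢ ({k} : Set V)) := by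
      rintro ⟨x, y⟩ hp
      simp only [Set.mem_setOf_eq, gradFn] at hp
      by_cases hadj : G.Adj x y
      · rw [if_pos hadj] at hp
        have hxy : (x ∈ W₁ ∧ y ∉ W₁) ∨ (y ∈ W₁ ∧ x ∉ W₁) := by
          by_cases hx : x ∈ W₁ <;> by_cases hy : y ∈ W₁ <;>
            simp [hχdef, hx, hy] at hp ⊢
        rcases hxy with ⟨hx, hy⟩ | ⟨hy, hx⟩
        · have hyK : y ∈ K := hboundary x y hx hy hadj
          refine Set.mem_biUnion hyK ?_
          exact Or.inr ⟨hadj.symm, rfl⟩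
        · have hxK : x ∈ K := hboundary y x hy hx hadj.symm
          refine Set.mem_biUnion hxK ?_
          exact Or.inl ⟨rfl, hadj⟩
      · rw [if_neg hadj] at hp; exact absurd rfl hp
    refine Set.Finite.subset ?_ hsub
    refine Set.Finite.biUnion hK fun k _ => ?_
    exact ((Set.finite_singleton k).prod (G.neighborSet k).toFinite).union
      ((G.neighborSet k).toFinite.prod (Set.finite_singleton k))
  have humem : Memℓp (gradFn G χ) 2 := memℓp_of_finite_support husup
  set u : lp (fun _ : V × V => ℝ) 2 := ⟨gradFn G χ, humem⟩ with hudef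
  have hucoe : ∀ p, u p = gradFn G χ p := fun p => rfl
  -- the space of gradients of finitely supported functions
  set C₀ : Submodule ℝ (lp (fun _ : V × V => ℝ) 2) :=
    { carrier := {z | ∃ f : V → ℝ, (Function.support f).Finite ∧ ∀ p, z p = gradFn G f p}
      add_mem' := by
        rintro a b ⟨f, hf, hfc⟩ ⟨g, hg, hgc⟩
        refine ⟨f + g, (hf.union hg).subset (by exact Function.support_add f g) , fun p => ?_⟩
        rw [lp.coeFn_add, Pi.add_apply, hfc p, hgc p, gradFn_add']
      zero_mem' := by
        refine ⟨0, by simp, fun p => ?_⟩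
        rw [lp.coeFn_zero]
        unfold gradFn
        by_cases h : G.Adj p.1 p.2 <;> simp [h]
      smul_mem' := by
        rintro c a ⟨f, hf, hfc⟩
        refine ⟨c • f, hf.subset (fun x hx => by
          simp only [Function.mem_support, Pi.smul_apply, smul_eq_mul] at hx ⊢
          intro h
          exact hx (by rw [h]; ring)), fun p => ?_⟩
        rw [lp.coeFn_smul, Pi.smul_apply, hfc p, smul_eq_mul, gradFn_smul'] } with hC₀def
  have hC₀mem : ∀ z, z ∈ C₀ ↔
      ∃ f : V → ℝ, (Function.support f).Finite ∧ ∀ p, z p = gradFn G f p := fun z => Iff.rfl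
  set C : Submodule ℝ (lp (fun _ : V × V => ℝ) 2) := C₀.topologicalClosure with hCdef
  have hCclosed : IsClosed (C : Set (lp (fun _ : V × V => ℝ) 2)) :=
    C₀.isClosed_topologicalClosure
  haveI : CompleteSpace C := hCclosed.completeSpace_coe
  set Pu : lp (fun _ : V × V => ℝ) 2 := (C.orthogonalProjection u : lp (fun _ : V × V => ℝ) 2)
    with hPudef
  have hPuC : Pu ∈ C := SetLike.coe_mem _
  set hv : lp (fun _ : V × V => ℝ) 2 := u - Pu with hvdef
  have hvperp : hv ∈ Cᗮ := by
    have := C.sub_starProjection_mem_orthogonal u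
    exact this
  -- approximating sequence
  have happrox : ∀ n : ℕ, ∃ z, z ∈ C₀ ∧ ‖Pu - z‖ < 1 / (n + 1) := by
    intro n
    have hPu' : Pu ∈ closure (C₀ : Set (lp (fun _ : V × V => ℝ) 2)) := by
      rw [← Submodule.topologicalClosure_coe]
      exact hPuC
    rw [Metric.mem_closure_iff] at hPu'
    obtain ⟨z, hz, hd⟩ := hPu' (1 / (n + 1)) (by positivity)
    exact ⟨z, hz, by rwa [dist_eq_norm] at hd⟩
  choose zs hzsC hzs using happrox
  have hzsP := fun n => (hC₀mem (zs n)).1 (hzsC n)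
  choose gs hgsfin hgscoe using hzsP
  set F : ℕ → V → ℝ := fun n => χ - gs n with hFdef
  set GF : ℕ → lp (fun _ : V × V => ℝ) 2 := fun n => u - zs n with hGFdef
  have hGFcoe : ∀ n p, GF n p = gradFn G (F n) p := by
    intro n p
    simp only [hGFdef]
    rw [lp.coeFn_sub, Pi.sub_apply, hucoe p, hgscoe n p, gradFn_sub]
  have hGFnorm : ∀ n, ‖hv - GF n‖ < 1 / (n + 1) := by
    intro n
    have : hv - GF n = zs n - Pu := by rw [hvdef, hGFdef]; exact sub_sub_sub_cancel_left _ _ _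
    rw [this, norm_sub_rev]
    exact hzs n
  have honedivtend : Filter.Tendsto (fun n : ℕ => 1 / ((n : ℝ) + 1)) Filter.atTop (nhds 0) :=
    tendsto_one_div_add_atTop_nhds_zero_nat
  have hcoordconv : ∀ p : V × V, Filter.Tendsto (fun n => GF n p) Filter.atTop (nhds (hv p)) := by
    intro p
    have hb : ∀ n, ‖GF n p - hv p‖ ≤ 1 / ((n : ℝ) + 1) := by
      intro n
      have h1 : GF n p - hv p = (GF n - hv) p := by rw [lp.coeFn_sub]; rfl
      rw [h1]
      refine le_trans (lp.norm_apply_le_norm (by norm_num) (GF n - hv) p) ?_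
      rw [norm_sub_rev]
      exact le_of_lt (hGFnorm n)
    have h0 : Filter.Tendsto (fun n => GF n p - hv p) Filter.atTop (nhds 0) :=
      squeeze_zero_norm hb honedivtend
    have := h0.add_const (hv p)
    simpa using this
    -- the flows as ℓ² elements
  have hθ₁mem : Memℓp (fun p : V × V => θ₁ p.1 p.2) 2 := memℓp_two_of_summable_sq θ₁sq
  have hθ₂mem : Memℓp (fun p : V × V => θ₂ p.1 p.2) 2 := memℓp_two_of_summable_sq θ₂sq
  set T₁ : lp (fun _ : V × V => ℝ) 2 := ⟨fun p : V × V => θ₁ p.1 p.2, hθ₁mem⟩ with hT₁def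
  set T₂ : lp (fun _ : V × V => ℝ) 2 := ⟨fun p : V × V => θ₂ p.1 p.2, hθ₂mem⟩ with hT₂def
  set wk : G.Walk a₁ a₂ := (hconn.preconnected a₁ a₂).some with hwkdef
  set η : V → V → ℝ := pathFlow G wk with hηdef
  have hηmem : Memℓp (fun p : V × V => η p.1 p.2) 2 :=
    memℓp_of_finite_support (pathFlow_support_finite G wk)
  set Tη : lp (fun _ : V × V => ℝ) 2 := ⟨fun p : V × V => η p.1 p.2, hηmem⟩ with hTηdef
  -- generic inner product formula
  have hinner : ∀ (z ζ : lp (fun _ : V × V => ℝ) 2) (f : V → ℝ) (θ : V → V → ℝ),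
      (∀ p, z p = gradFn G f p) → (∀ p : V × V, ζ p = θ p.1 p.2) →
      ⟪z, ζ⟫ = ∑' p : V × V, gradFn G f p * θ p.1 p.2 := by
    intro z ζ f θ hz hζ
    rw [inner_eq_tsum_real]
    exact tsum_congr fun p => by rw [hz p, hζ p]
  -- pairing with θ₁ and θ₂
  have hrowzero₁ : ∀ x, x ≠ a₁ → ∑' y, θ₁ x y = 0 := by
    intro x hx
    by_cases hxW : x ∈ W₁
    · exact θ₁div x hxW hx
    · rw [show (fun y => θ₁ x y) = fun _ => (0:ℝ) from funext fun y => by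
        by_contra hc
        exact hxW (θ₁sup x y hc).2.1]
      exact tsum_zero
  have hrowzero₂ : ∀ x, x ≠ a₂ → ∑' y, θ₂ x y = 0 := by
    intro x hx
    by_cases hxW : x ∈ W₂
    · exact θ₂div x hxW hx
    · rw [show (fun y => θ₂ x y) = fun _ => (0:ℝ) from funext fun y => by
        by_contra hc
        exact hxW (θ₂sup x y hc).2.1]
      exact tsum_zero
  have hpairgen : ∀ (z : lp (fun _ : V × V => ℝ) 2) (f : V → ℝ)
      (θ : V → V → ℝ) (a : V), (Function.support f).Finite →
      (∀ p, z p = gradFn G f p) →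
      (∀ x y, θ x y = - θ y x) → (∀ x y, θ x y ≠ 0 → G.Adj x y) →
      (∀ x, x ≠ a → ∑' y, θ x y = 0) → (∑' y, θ a y = 1) →
      ∀ (hmem : Memℓp (fun p : V × V => θ p.1 p.2) 2),
      ⟪z, (⟨fun p : V × V => θ p.1 p.2, hmem⟩ :
        lp (fun _ : V × V => ℝ) 2)⟫ = 2 * f a := by
    intro z f θ a hffin hz hanti hedge hrz hunit hmem
    set A : Finset V := hffin.toFinset ∪ hffin.toFinset.biUnion (fun v => G.neighborFinset v)
      with hAdef
    have hsuppA : ∀ x, f x ≠ 0 → x ∈ A := by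
      intro x hx
      exact Finset.mem_union_left _ (hffin.mem_toFinset.2 hx)
    have hnbrA : ∀ x y, f x ≠ 0 → G.Adj x y → y ∈ A := by
      intro x y hx hadj
      refine Finset.mem_union_right _ (Finset.mem_biUnion.2 ⟨x, hffin.mem_toFinset.2 hx, ?_⟩)
      exact (G.mem_neighborFinset x y).2 hadj
    rw [hinner z _ f θ hz (fun p => rfl)]
    rw [pairing G f θ A hanti hedge ?hsupp ?hrow]
    case hsupp =>
      intro x y hprod
      have hθxy : θ x y ≠ 0 := fun hc => hprod (by rw [hc, mul_zero])
      have hgrad : gradFn G f (x, y) ≠ 0 := fun hc => hprod (by rw [hc, zero_mul])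
      have hadj : G.Adj x y := hedge x y hθxy
      have hfs : f x ≠ 0 ∨ f y ≠ 0 := by
        by_contra hc
        push_neg at hc
        apply hgrad
        unfold gradFn
        simp [hadj, hc.1, hc.2]
      rcases hfs with hfx | hfy
      · exact ⟨hsuppA x hfx, hnbrA x y hfx hadj⟩
      · exact ⟨hnbrA y x hfy hadj.symm, hsuppA y hfy⟩
    case hrow =>
      intro x _ hfx y hθxy
      exact hnbrA x y hfx (hedge x y hθxy)
    rw [Finset.sum_eq_single a]
    · rw [hunit, mul_one]
    · intro b _ hb
      rw [hrz b hb, mul_zero]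
    · intro ha
      have : f a = 0 := by
        by_contra hc
        exact ha (hsuppA a hc)
      rw [this, zero_mul]
  -- pairing with the path flow
  have ha₁wk : a₁ ∈ wk.support.toFinset := List.mem_toFinset.2 wk.start_mem_support
  have ha₂wk : a₂ ∈ wk.support.toFinset := List.mem_toFinset.2 wk.end_mem_support
  have hpairη : ∀ (z : lp (fun _ : V × V => ℝ) 2) (f : V → ℝ),
      (∀ p, z p = gradFn G f p) → ⟪z, Tη⟫ = 2 * (f a₁ - f a₂) := by
    intro z f hz
    rw [hinner z Tη f η hz (fun p => rfl)]
    rw [pairing G f η wk.support.toFinset (pathFlow_anti G wk) (pathFlow_edge G wk)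
      ?hsupp ?hrow]
    case hsupp =>
      intro x y hprod
      have hηxy : η x y ≠ 0 := fun hc => hprod (by rw [hc, mul_zero])
      obtain ⟨hx, hy⟩ := pathFlow_mem_support G wk x y hηxy
      exact ⟨List.mem_toFinset.2 hx, List.mem_toFinset.2 hy⟩
    case hrow =>
      intro x _ _ y hηxy
      exact List.mem_toFinset.2 (pathFlow_mem_support G wk x y hηxy).2
    have hterm : ∀ x ∈ wk.support.toFinset,
        f x * ∑' y, η x y = (if x = a₁ then f x else 0) - (if x = a₂ then f x else 0) := by
      intro x _
      rw [hηdef, pathFlow_rowsum G wk x]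
      simp [mul_sub, mul_ite]
    rw [Finset.sum_congr rfl hterm, Finset.sum_sub_distrib,
      Finset.sum_ite_eq' wk.support.toFinset a₁ f, Finset.sum_ite_eq' wk.support.toFinset a₂ f,
      if_pos ha₁wk, if_pos ha₂wk]
    -- Cauchy property of evaluations at a₁
  have hzsnorm : ∀ n m : ℕ, ‖zs m - zs n‖ ≤ 1 / (m + 1) + 1 / (n + 1) := by
    intro n m
    have : zs m - zs n = -(Pu - zs m) + (Pu - zs n) := by abel
    rw [this]
    refine le_trans (norm_add_le _ _) ?_
    rw [norm_neg]
    exact add_le_add (le_of_lt (hzs m)) (le_of_lt (hzs n))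
  have hdiffpair : ∀ n m : ℕ, ⟪zs m - zs n, T₁⟫ = 2 * (F n a₁ - F m a₁) := by
    intro n m
    have hcoe : ∀ p, (zs m - zs n) p = gradFn G (gs m - gs n) p := by
      intro p
      rw [lp.coeFn_sub, Pi.sub_apply, hgscoe m p, hgscoe n p, gradFn_sub]
    have hfin : (Function.support (gs m - gs n)).Finite :=
      ((hgsfin m).union (hgsfin n)).subset (by exact Function.support_sub (gs m) (gs n))
    have := hpairgen (zs m - zs n) (gs m - gs n) θ₁ a₁ hfin hcoe θ₁anti
      (fun x y h => (θ₁sup x y h).1) hrowzero₁ θ₁unit hθ₁mem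
    rw [hT₁def]
    rw [this]
    have : F n a₁ - F m a₁ = (gs m - gs n) a₁ := by
      simp only [hFdef, Pi.sub_apply]
      ring
    rw [this]
  have hFa₁cauchy : CauchySeq (fun n => F n a₁) := by
    apply cauchySeq_of_le_tendsto_0 (b := fun N : ℕ => ‖T₁‖ * (1 / (N + 1)))
    · intro n m N hn hm
      have h1 : |(2:ℝ) * (F n a₁ - F m a₁)| ≤ ‖zs m - zs n‖ * ‖T₁‖ := by
        rw [← hdiffpair n m]
        exact abs_real_inner_le_norm _ _
      have h2 : ‖zs m - zs n‖ ≤ 2 / (N + 1) := by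
        refine le_trans (hzsnorm n m) ?_
        have e1 : (1:ℝ) / (m + 1) ≤ 1 / (N + 1) := by
          apply one_div_le_one_div_of_le (by positivity)
          have : (N:ℝ) ≤ m := Nat.cast_le.2 hm
          linarith
        have e2 : (1:ℝ) / (n + 1) ≤ 1 / (N + 1) := by
          apply one_div_le_one_div_of_le (by positivity)
          have : (N:ℝ) ≤ n := Nat.cast_le.2 hn
          linarith
        rw [show (2:ℝ) / (N + 1) = 1 / (N + 1) + 1 / (N + 1) by ring]
        exact add_le_add e1 e2
      rw [Real.dist_eq]
      have habs : |F n a₁ - F m a₁| = |(2:ℝ) * (F n a₁ - F m a₁)| / 2 := by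
        rw [abs_mul, abs_of_nonneg (by norm_num : (0:ℝ) ≤ 2)]
        ring
      rw [habs]
      rw [div_le_iff₀ (by norm_num : (0:ℝ) < 2)]
      calc |(2:ℝ) * (F n a₁ - F m a₁)| ≤ ‖zs m - zs n‖ * ‖T₁‖ := h1
        _ ≤ 2 / (N + 1) * ‖T₁‖ := by
            apply mul_le_mul_of_nonneg_right h2 (norm_nonneg _)
        _ = ‖T₁‖ * (1 / (N + 1)) * 2 := by ring
    · rw [show (0:ℝ) = ‖T₁‖ * 0 by ring]
      exact honedivtend.const_mul ‖T₁‖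
  -- pointwise convergence everywhere
  have hptwise : ∀ x : V, ∃ L, Filter.Tendsto (fun n => F n x) Filter.atTop (nhds L) := by
    have hbase : ∃ L, Filter.Tendsto (fun n => F n a₁) Filter.atTop (nhds L) :=
      cauchySeq_tendsto_of_complete hFa₁cauchy
    intro x
    refine walk_transfer G
      (P := fun v => ∃ L, Filter.Tendsto (fun n => F n v) Filter.atTop (nhds L)) ?_
      ((hconn.preconnected a₁ x).some) hbase
    rintro x y hadj ⟨L, hL⟩
    refine ⟨L - hv (x, y), ?_⟩
    have heq : ∀ n, F n y = F n x - GF n (x, y) := by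
      intro n
      rw [hGFcoe n (x, y)]
      unfold gradFn
      rw [if_pos hadj]
      ring
    rw [show (fun n => F n y) = fun n => F n x - GF n (x, y) from funext heq]
    exact hL.sub (hcoordconv (x, y))
  choose hfun htend using hptwise
  -- the gradient of hfun is hv
  have hcoordh : ∀ p : V × V, hv p = gradFn G hfun p := by
    intro p
    by_cases hadj : G.Adj p.1 p.2
    · have h1 : Filter.Tendsto (fun n => GF n p) Filter.atTop
          (nhds (hfun p.1 - hfun p.2)) := by
        have heq : ∀ n, GF n p = F n p.1 - F n p.2 := by
          intro n
          rw [hGFcoe n p]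
          unfold gradFn
          rw [if_pos hadj]
        rw [show (fun n => GF n p) = fun n => F n p.1 - F n p.2 from funext heq]
        exact (htend p.1).sub (htend p.2)
      have := tendsto_nhds_unique (hcoordconv p) h1
      rw [this]
      unfold gradFn
      rw [if_pos hadj]
    · have h1 : Filter.Tendsto (fun n => GF n p) Filter.atTop (nhds 0) := by
        have heq : ∀ n, GF n p = 0 := by
          intro n
          rw [hGFcoe n p]
          unfold gradFn
          rw [if_neg hadj]
        rw [show (fun n => GF n p) = fun _ => (0:ℝ) from funext heq]
        exact tendsto_const_nhds
      have := tendsto_nhds_unique (hcoordconv p) h1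
      rw [this]
      unfold gradFn
      rw [if_neg hadj]
  -- finite Dirichlet energy
  have hEnergy : FiniteDirichletEnergy G hfun := by
    unfold FiniteDirichletEnergy
    have heq : (fun p : V × V => if G.Adj p.1 p.2 then (hfun p.1 - hfun p.2) ^ 2 else 0)
        = fun p => hv p ^ 2 := by
      funext p
      rw [hcoordh p]
      unfold gradFn
      by_cases hadj : G.Adj p.1 p.2 <;> simp [hadj]
    rw [heq]
    exact summable_sq_of_mem hv
  -- harmonicity
  have hHarm : HarmonicOn G hfun := by
    intro x₀
    set δ : V → ℝ := fun x => if x = x₀ then 1 else 0 with hδdef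
    have hδfin : (Function.support δ).Finite := by
      apply (Set.finite_singleton x₀).subset
      intro x hx
      simp only [Function.mem_support, hδdef] at hx
      by_contra hc
      simp only [Set.mem_singleton_iff] at hc
      rw [if_neg hc] at hx
      exact hx rfl
    have hδmem : Memℓp (gradFn G δ) 2 :=
      memℓp_of_finite_support (gradFn_support_finite G hδfin)
    set zδ : lp (fun _ : V × V => ℝ) 2 := ⟨gradFn G δ, hδmem⟩ with hzδdef
    have hzC : zδ ∈ C := C₀.le_topologicalClosure ⟨δ, hδfin, fun p => rfl⟩
    have h0 : ⟪zδ, hv⟫ = 0 := (Submodule.mem_orthogonal C hv).1 hvperp zδ hzC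
    have hzcoe : ∀ p, zδ p = gradFn G δ p := fun p => rfl
    set N : Finset V := G.neighborFinset x₀ with hNdef
    set T : Finset (V × V) := ({x₀} ×ˢ N) ∪ (N ×ˢ {x₀}) with hTdef
    have hinnerδ : ⟪zδ, hv⟫ = ∑ p ∈ T, gradFn G δ p * hv p := by
      rw [inner_eq_tsum_real]
      have hcongr : (fun p : V × V => zδ p * hv p) = fun p => gradFn G δ p * hv p := by
        funext p; rw [hzcoe p]
      rw [hcongr]
      apply tsum_eq_sum
      intro p hp
      have hgz : gradFn G δ p = 0 := by
        by_contra hc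
        apply hp
        unfold gradFn at hc
        by_cases hadj : G.Adj p.1 p.2
        · rw [if_pos hadj] at hc
          have hne' : δ p.1 ≠ δ p.2 := fun h => hc (by rw [h]; ring)
          rw [hTdef]
          by_cases h1 : p.1 = x₀
          · refine Finset.mem_union_left _ ?_
            rw [Finset.mem_product]
            refine ⟨by simp [h1], ?_⟩
            rw [hNdef, SimpleGraph.mem_neighborFinset]
            rw [← h1]; exact hadj
          · have h2 : p.2 = x₀ := by
              by_contra h2
              apply hne'
              rw [hδdef]
              simp [h1, h2]
            refine Finset.mem_union_right _ ?_
            rw [Finset.mem_product]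
            refine ⟨?_, by simp [h2]⟩
            rw [hNdef, SimpleGraph.mem_neighborFinset, ← h2]
            exact hadj.symm
        · rw [if_neg hadj] at hc
          exact absurd rfl hc
      rw [hgz, zero_mul]
    have hdisjT : Disjoint (({x₀} : Finset V) ×ˢ N) (N ×ˢ ({x₀} : Finset V)) := by
      rw [Finset.disjoint_left]
      rintro ⟨x, y⟩ h1 h2
      rw [Finset.mem_product] at h1 h2
      simp only [Finset.mem_singleton] at h1 h2
      have hy : y ∈ N := h1.2
      rw [h2.2] at hy
      rw [hNdef, SimpleGraph.mem_neighborFinset] at hy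
      exact G.loopless.irrefl x₀ hy
    have hsum1 : ∑ p ∈ ({x₀} : Finset V) ×ˢ N, gradFn G δ p * hv p
        = ∑ y ∈ N, (hfun x₀ - hfun y) := by
      rw [Finset.sum_product, Finset.sum_singleton]
      refine Finset.sum_congr rfl fun y hy => ?_
      have hadj : G.Adj x₀ y := by rwa [hNdef, SimpleGraph.mem_neighborFinset] at hy
      have hyx₀ : y ≠ x₀ := fun h => G.loopless.irrefl x₀ (h ▸ hadj)
      have hgrad : gradFn G δ (x₀, y) = 1 := by
        unfold gradFn
        rw [if_pos hadj, hδdef]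
        simp [hyx₀]
      have hhv : hv (x₀, y) = hfun x₀ - hfun y := by
        rw [hcoordh (x₀, y)]
        unfold gradFn
        rw [if_pos hadj]
      rw [hgrad, hhv, one_mul]
    have hsum2 : ∑ p ∈ N ×ˢ ({x₀} : Finset V), gradFn G δ p * hv p
        = ∑ x ∈ N, (hfun x₀ - hfun x) := by
      rw [Finset.sum_product]
      refine Finset.sum_congr rfl fun x hx => ?_
      rw [Finset.sum_singleton]
      have hadj : G.Adj x₀ x := by rwa [hNdef, SimpleGraph.mem_neighborFinset] at hx
      have hxx₀ : x ≠ x₀ := fun h => G.loopless.irrefl x₀ (h ▸ hadj)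
      have hgrad : gradFn G δ (x, x₀) = -1 := by
        unfold gradFn
        rw [if_pos hadj.symm, hδdef]
        simp [hxx₀]
      have hhv : hv (x, x₀) = hfun x - hfun x₀ := by
        rw [hcoordh (x, x₀)]
        unfold gradFn
        rw [if_pos hadj.symm]
      rw [hgrad, hhv]
      ring
    have hzero : (0:ℝ) = ∑ p ∈ ({x₀} : Finset V) ×ˢ N, gradFn G δ p * hv p
        + ∑ p ∈ N ×ˢ ({x₀} : Finset V), gradFn G δ p * hv p := by
      rw [← h0, hinnerδ, hTdef, Finset.sum_union hdisjT]
    rw [hsum1, hsum2] at hzero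
    have hfin : ∑ y ∈ N, (hfun x₀ - hfun y) = 0 := by linarith
    have hexp : ∑ y ∈ N, (hfun x₀ - hfun y)
        = N.card * hfun x₀ - ∑ y ∈ N, hfun y := by
      rw [Finset.sum_sub_distrib, Finset.sum_const, nsmul_eq_mul]
    rw [hexp] at hfin
    have hdeg : (G.degree x₀ : ℝ) = (N.card : ℝ) := by
      rw [hNdef]; rfl
    rw [hdeg]
    linarith
    -- boundedness via truncation
  set hk : V → ℝ := fun x => clampFn (hfun x) with hkdef
  have hksq : ∀ p : V × V, gradFn G hk p ^ 2 ≤ hv p ^ 2 := by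
    intro p
    rw [hcoordh p]
    unfold gradFn
    by_cases hadj : G.Adj p.1 p.2
    · rw [if_pos hadj, if_pos hadj]
      have hl := clampFn_lip (hfun p.1) (hfun p.2)
      have h1 : |clampFn (hfun p.1) - clampFn (hfun p.2)| ^ 2
          ≤ |hfun p.1 - hfun p.2| ^ 2 := pow_le_pow_left₀ (abs_nonneg _) hl 2
      rwa [sq_abs, sq_abs] at h1
    · rw [if_neg hadj, if_neg hadj]
  have hkmem : Memℓp (gradFn G hk) 2 :=
    memℓp_two_of_summable_sq
      (Summable.of_nonneg_of_le (fun p => sq_nonneg _) hksq (summable_sq_of_mem hv))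
  set ku : lp (fun _ : V × V => ℝ) 2 := ⟨gradFn G hk, hkmem⟩ with hkudef
  have hkunorm : ‖ku‖ ≤ ‖hv‖ := norm_le_of_sq_le (fun p => hksq p)
  -- truncated approximations
  have hknsq : ∀ n (p : V × V),
      gradFn G (fun x => clampFn (F n x)) p ^ 2 ≤ GF n p ^ 2 := by
    intro n p
    rw [hGFcoe n p]
    unfold gradFn
    by_cases hadj : G.Adj p.1 p.2
    · rw [if_pos hadj, if_pos hadj]
      have hl := clampFn_lip (F n p.1) (F n p.2)
      have h1 : |clampFn (F n p.1) - clampFn (F n p.2)| ^ 2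
          ≤ |F n p.1 - F n p.2| ^ 2 := pow_le_pow_left₀ (abs_nonneg _) hl 2
      rwa [sq_abs, sq_abs] at h1
    · rw [if_neg hadj, if_neg hadj]
  have hknmem : ∀ n, Memℓp (gradFn G (fun x => clampFn (F n x))) 2 := by
    intro n
    exact memℓp_two_of_summable_sq
      (Summable.of_nonneg_of_le (fun p => sq_nonneg _) (hknsq n) (summable_sq_of_mem (GF n)))
  set kn : ℕ → lp (fun _ : V × V => ℝ) 2 :=
    fun n => ⟨gradFn G (fun x => clampFn (F n x)), hknmem n⟩ with hkndef
  set ws : ℕ → lp (fun _ : V × V => ℝ) 2 := fun n => kn n - u with hwsdef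
  have hwsC : ∀ n, ws n ∈ C := by
    intro n
    apply C₀.le_topologicalClosure
    refine ⟨(fun x => clampFn (F n x)) - χ, ?_, ?_⟩
    · apply (hgsfin n).subset
      intro x hx
      rw [Function.mem_support] at hx ⊢
      intro hgx
      apply hx
      have hFx : F n x = χ x := by
        simp only [hFdef, Pi.sub_apply, hgx, sub_zero]
      have hclamp : clampFn (F n x) = χ x := by
        rw [hFx, hχdef]
        by_cases hxW : x ∈ W₁
        · simp only [if_pos hxW]
          exact clampFn_one
        · simp only [if_neg hxW]
          exact clampFn_zero
      simp only [Pi.sub_apply, hclamp, hχdef]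
      ring
    · intro p
      simp only [hwsdef]
      rw [lp.coeFn_sub, Pi.sub_apply]
      have h1 : (kn n) p = gradFn G (fun x => clampFn (F n x)) p := rfl
      rw [h1, hucoe p, gradFn_sub]
  have hwsbd : ∀ n, ‖ws n‖ ≤ ‖hv‖ + 1 + ‖u‖ := by
    intro n
    have h1 : ‖kn n‖ ≤ ‖GF n‖ := norm_le_of_sq_le (fun p => hknsq n p)
    have h2 : ‖GF n‖ ≤ ‖hv‖ + 1 := by
      have : GF n = hv - (hv - GF n) := by abel
      rw [this]
      refine le_trans (norm_sub_le _ _) ?_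
      have h3 : ‖hv - GF n‖ ≤ 1 := by
        refine le_trans (le_of_lt (hGFnorm n)) ?_
        rw [div_le_one (by positivity)]
        have : (0:ℝ) ≤ n := Nat.cast_nonneg n
        linarith
      linarith
    simp only [hwsdef]
    refine le_trans (norm_sub_le _ _) ?_
    linarith
  have hwscoord : ∀ p : V × V,
      Filter.Tendsto (fun n => ws n p) Filter.atTop (nhds ((ku - u) p)) := by
    intro p
    have hcoe : ∀ n, ws n p = gradFn G (fun x => clampFn (F n x)) p - u p := by
      intro n
      simp only [hwsdef]
      rw [lp.coeFn_sub, Pi.sub_apply]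
    have hcoe2 : (ku - u) p = gradFn G hk p - u p := by
      rw [lp.coeFn_sub, Pi.sub_apply]
    rw [show (fun n => ws n p) = fun n => gradFn G (fun x => clampFn (F n x)) p - u p
      from funext hcoe, hcoe2]
    by_cases hadj : G.Adj p.1 p.2
    · have he1 : ∀ n, gradFn G (fun x => clampFn (F n x)) p
          = clampFn (F n p.1) - clampFn (F n p.2) := by
        intro n; unfold gradFn; rw [if_pos hadj]
      have he2 : gradFn G hk p = clampFn (hfun p.1) - clampFn (hfun p.2) := by
        unfold gradFn; rw [if_pos hadj]
      rw [show (fun n => gradFn G (fun x => clampFn (F n x)) p - u p)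
        = fun n => clampFn (F n p.1) - clampFn (F n p.2) - u p from funext fun n => by
          rw [he1 n], he2]
      exact ((((continuous_clampFn.tendsto _).comp (htend p.1)).sub
        ((continuous_clampFn.tendsto _).comp (htend p.2))).sub tendsto_const_nhds)
    · have he1 : ∀ n, gradFn G (fun x => clampFn (F n x)) p = 0 := by
        intro n; unfold gradFn; rw [if_neg hadj]
      have he2 : gradFn G hk p = 0 := by
        unfold gradFn; rw [if_neg hadj]
      rw [show (fun n => gradFn G (fun x => clampFn (F n x)) p - u p)
        = fun _ => (0:ℝ) - u p from funext fun n => by rw [he1 n], he2]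
      exact tendsto_const_nhds
  have hkuC : ku - u ∈ C := mem_of_coord_tendsto hCclosed hwsC hwsbd hwscoord
  have hcC : ku - hv ∈ C := by
    have heq : ku - hv = (ku - u) + Pu := by rw [hvdef]; abel
    rw [heq]
    exact C.add_mem hkuC hPuC
  have hinner0 : ⟪hv, ku - hv⟫ = 0 := by
    rw [real_inner_comm]
    exact (Submodule.mem_orthogonal C hv).1 hvperp _ hcC
  have hkueq : ku = hv := by
    have hpyth : ‖ku‖ ^ 2 = ‖hv‖ ^ 2 + 2 * ⟪hv, ku - hv⟫ + ‖ku - hv‖ ^ 2 := by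
      have heq : ku = hv + (ku - hv) := by abel
      calc ‖ku‖ ^ 2 = ‖hv + (ku - hv)‖ ^ 2 := by rw [← heq]
        _ = ‖hv‖ ^ 2 + 2 * ⟪hv, ku - hv⟫ + ‖ku - hv‖ ^ 2 := norm_add_sq_real _ _
    have hle : ‖ku‖ ^ 2 ≤ ‖hv‖ ^ 2 := pow_le_pow_left₀ (norm_nonneg _) hkunorm 2
    rw [hinner0] at hpyth
    have h0 : ‖ku - hv‖ ^ 2 ≤ 0 := by linarith
    have h1 : ‖ku - hv‖ ^ 2 = 0 := le_antisymm h0 (sq_nonneg _)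
    have h2 : ‖ku - hv‖ = 0 := by
      exact pow_eq_zero_iff (by norm_num) |>.1 h1
    have h3 : ku - hv = 0 := norm_eq_zero.1 h2
    exact sub_eq_zero.1 h3
  have hgradeq : ∀ x y, G.Adj x y → hk x - hk y = hfun x - hfun y := by
    intro x y hadj
    have h1 : ku (x, y) = gradFn G hk (x, y) := rfl
    rw [hkueq] at h1
    have h2 := hcoordh (x, y)
    rw [h2] at h1
    unfold gradFn at h1
    rw [if_pos hadj, if_pos hadj] at h1
    exact h1.symm
  have hconstdiff : ∀ x, hk x - hfun x = hk a₁ - hfun a₁ := by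
    intro x
    refine walk_transfer G (P := fun v => hk v - hfun v = hk a₁ - hfun a₁) ?_
      ((hconn.preconnected a₁ x).some) rfl
    intro x y hadj hx
    have := hgradeq x y hadj
    linarith
  have hbound : ∀ x, |hfun x| ≤ 1 + |hk a₁ - hfun a₁| := by
    intro x
    have heq : hfun x = hk x - (hk a₁ - hfun a₁) := by
      have := hconstdiff x
      linarith
    rw [heq]
    refine le_trans (abs_sub _ _) ?_
    have hk1 : |hk x| ≤ 1 := by
      rw [abs_le]
      constructor
      · have := (clampFn_mem (hfun x)).1
        simp only [hkdef]
        linarith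
      · exact (clampFn_mem (hfun x)).2
    linarith
  -- nonconstancy
  have hnoncon : ¬ (∀ x y : V, hfun x = hfun y) := by
    intro hcon
    have hv0 : hv = 0 := by
      apply Subtype.ext
      funext p
      have := hcoordh p
      rw [lp.coeFn_zero] at *
      show hv p = 0
      rw [this]
      unfold gradFn
      by_cases hadj : G.Adj p.1 p.2
      · rw [if_pos hadj, hcon p.1 p.2]
        ring
      · rw [if_neg hadj]
    have huC : u ∈ C := by
      have : u = Pu := by
        have h1 : u - Pu = 0 := by rw [← hvdef, hv0]
        exact sub_eq_zero.1 h1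
      rw [this]
      exact hPuC
    set ζ : lp (fun _ : V × V => ℝ) 2 := T₁ - T₂ - Tη with hζdef
    have hεpos : (0:ℝ) < 1 / (‖ζ‖ + 1) := by positivity
    have huclosure : u ∈ closure (C₀ : Set (lp (fun _ : V × V => ℝ) 2)) := by
      rw [← Submodule.topologicalClosure_coe]
      exact huC
    rw [Metric.mem_closure_iff] at huclosure
    obtain ⟨z, hzC₀', hdz⟩ := huclosure (1 / (‖ζ‖ + 1)) hεpos
    obtain ⟨f, hffin, hfcoe⟩ := (hC₀mem z).1 hzC₀'
    have hz1 : ⟪z, T₁⟫ = 2 * f a₁ := by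
      rw [hT₁def]
      exact hpairgen z f θ₁ a₁ hffin hfcoe θ₁anti
        (fun x y h => (θ₁sup x y h).1) hrowzero₁ θ₁unit hθ₁mem
    have hz2 : ⟪z, T₂⟫ = 2 * f a₂ := by
      rw [hT₂def]
      exact hpairgen z f θ₂ a₂ hffin hfcoe θ₂anti
        (fun x y h => (θ₂sup x y h).1) hrowzero₂ θ₂unit hθ₂mem
    have hzη : ⟪z, Tη⟫ = 2 * (f a₁ - f a₂) := hpairη z f hfcoe
    have hu1 : ⟪u, T₁⟫ = 0 := by
      rw [inner_eq_tsum_real]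
      rw [show (fun p : V × V => u p * T₁ p) = fun _ => (0:ℝ) from funext fun p => ?_]
      · exact tsum_zero
      by_cases hθ : θ₁ p.1 p.2 = 0
      · have : T₁ p = 0 := hθ
        rw [this, mul_zero]
      · obtain ⟨hadj, h1, h2⟩ := θ₁sup p.1 p.2 hθ
        have : u p = 0 := by
          rw [hucoe p]
          unfold gradFn
          rw [if_pos hadj, hχdef]
          simp [h1, h2]
        rw [this, zero_mul]
    have hu2 : ⟪u, T₂⟫ = 0 := by
      rw [inner_eq_tsum_real]
      rw [show (fun p : V × V => u p * T₂ p) = fun _ => (0:ℝ) from funext fun p => ?_]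
      · exact tsum_zero
      by_cases hθ : θ₂ p.1 p.2 = 0
      · have : T₂ p = 0 := hθ
        rw [this, mul_zero]
      · obtain ⟨hadj, h1, h2⟩ := θ₂sup p.1 p.2 hθ
        have hn1 : p.1 ∉ W₁ := fun hw => hdisj p.1 hw h1
        have hn2 : p.2 ∉ W₁ := fun hw => hdisj p.2 hw h2
        have : u p = 0 := by
          rw [hucoe p]
          unfold gradFn
          rw [if_pos hadj, hχdef]
          simp [hn1, hn2]
        rw [this, zero_mul]
    have huη : ⟪u, Tη⟫ = 2 := by
      rw [hpairη u χ hucoe]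
      have hχ1 : χ a₁ = 1 := by rw [hχdef]; simp [ha₁]
      have hχ2 : χ a₂ = 0 := by rw [hχdef]; simp [ha₂W₁]
      rw [hχ1, hχ2]
      ring
    have hinneru : ⟪u, ζ⟫ = -2 := by
      rw [hζdef, inner_sub_right, inner_sub_right, hu1, hu2, huη]
      ring
    have hinnerz : ⟪z, ζ⟫ = 0 := by
      rw [hζdef, inner_sub_right, inner_sub_right, hz1, hz2, hzη]
      ring
    have hfinal : ⟪u - z, ζ⟫ = -2 := by
      rw [inner_sub_left, hinneru, hinnerz]
      ring
    have habs : (2:ℝ) ≤ ‖u - z‖ * ‖ζ‖ := by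
      have h1 : |⟪u - z, ζ⟫| ≤ ‖u - z‖ * ‖ζ‖ := abs_real_inner_le_norm _ _
      rw [hfinal] at h1
      rw [show |(-2:ℝ)| = 2 by norm_num] at h1
      exact h1
    have hdz' : ‖u - z‖ < 1 / (‖ζ‖ + 1) := by rwa [dist_eq_norm] at hdz
    have hb1 : ‖u - z‖ * ‖ζ‖ ≤ (1 / (‖ζ‖ + 1)) * ‖ζ‖ :=
      mul_le_mul_of_nonneg_right (le_of_lt hdz') (norm_nonneg _)
    have hb2 : (1 / (‖ζ‖ + 1)) * ‖ζ‖ < 1 := by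
      rw [div_mul_eq_mul_div, one_mul, div_lt_one (by positivity)]
      linarith
    linarith
  exact ⟨hfun, hHarm, ⟨1 + |hk a₁ - hfun a₁|, hbound⟩, hEnergy, hnoncon⟩


end
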